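/- Let u : ℝ^{1+n} → ℂ be a C² map satisfying □₂u = 0 and ∂^μu ∂_μu = 0. For every C² function f : ℂ → ℂ (viewed as a function of u and ū), the current J_μ = (∂f/∂u) ∂_μu − (∂f/∂ū) ∂_μū is conserved: ∂^μ J_μ = 0. -/

import Mathlib

/-- Partial derivative in the μ-th coordinate direction. -/
noncomputable def pd {n : ℕ} (μ : Fin (n+1)) (u : (Fin (n+1) → ℝ) → ℂ) :
    (Fin (n+1) → ℝ) → ℂ :=
  fun x => fderiv ℝ u x (Pi.single μ 1)

/-- The d'Alembertian □₂ = ∂₀² − Σⱼ ∂ⱼ² on ℝ^{1+n}. -/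
noncomputable def box2 {n : ℕ} (u : (Fin (n+1) → ℝ) → ℂ) :
    (Fin (n+1) → ℝ) → ℂ :=
  fun x => pd 0 (pd 0 u) x - ∑ j : Fin n, pd j.succ (pd j.succ u) x

/-- Wirtinger derivative ∂F/∂z of F : ℂ → ℂ viewed as a real-differentiable map. -/
noncomputable def w1 (F : ℂ → ℂ) : ℂ → ℂ :=
  fun z => (fderiv ℝ F z 1 - Complex.I * fderiv ℝ F z Complex.I) / 2

/-- Wirtinger derivative ∂F/∂z̄ of F : ℂ → ℂ. -/
noncomputable def w1bar (F : ℂ → ℂ) : ℂ → ℂ :=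
  fun z => (fderiv ℝ F z 1 + Complex.I * fderiv ℝ F z Complex.I) / 2

open Complex

section Aux

lemma wirt_decomp (L : ℂ →L[ℝ] ℂ) (w : ℂ) :
    L w = (L 1 - I * L I) / 2 * w + (L 1 + I * L I) / 2 * (starRingEnd ℂ w) := by
  have h0 : w = w.re • (1 : ℂ) + w.im • I := by
    simp [Complex.real_smul]
  have h1 : L w = (w.re : ℂ) * L 1 + (w.im : ℂ) * L I := by
    conv_lhs => rw [h0]
    rw [map_add, map_smul, map_smul]
    simp [Complex.real_smul]
  have h2 : starRingEnd ℂ w = (w.re : ℂ) - (w.im : ℂ) * I := by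
    apply Complex.ext <;> simp
  have hw : w = (w.re : ℂ) + (w.im : ℂ) * I := (Complex.re_add_im w).symm
  set x := (w.re : ℂ)
  set y := (w.im : ℂ)
  rw [h1, h2, hw]
  linear_combination (y * L I) * Complex.I_mul_I

lemma pd_comp {n : ℕ} (μ : Fin (n+1)) (u : (Fin (n+1) → ℝ) → ℂ) (f : ℂ → ℂ)
    (x : (Fin (n+1) → ℝ)) (hu : DifferentiableAt ℝ u x) (hf : DifferentiableAt ℝ f (u x)) :
    pd μ (fun y => f (u y)) x
      = w1 f (u x) * pd μ u x + w1bar f (u x) * starRingEnd ℂ (pd μ u x) := by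
  have h := fderiv_comp x hf hu
  simp only [pd, w1, w1bar]
  rw [show (fun y => f (u y)) = f ∘ u from rfl, h, ContinuousLinearMap.coe_comp',
    Function.comp_apply]
  exact wirt_decomp _ _

lemma pd_conj {n : ℕ} (μ : Fin (n+1)) (u : (Fin (n+1) → ℝ) → ℂ)
    (x : (Fin (n+1) → ℝ)) :
    pd μ (fun y => starRingEnd ℂ (u y)) x = starRingEnd ℂ (pd μ u x) := by
  simp only [pd]
  have h : (fun y => starRingEnd ℂ (u y)) = (Complex.conjCLE : ℂ → ℂ) ∘ u := by
    funext y; simp [Complex.conjCLE_apply]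
  rw [h, Complex.conjCLE.comp_fderiv]
  simp

lemma fderiv_aux (a b : ℂ → ℂ) (z w : ℂ) (c : ℂ)
    (ha : DifferentiableAt ℝ a z) (hb : DifferentiableAt ℝ b z) :
    fderiv ℝ (fun y => (a y + c * b y) / 2) z w
      = (fderiv ℝ a z w + c * fderiv ℝ b z w) / 2 := by
  have h1 : DifferentiableAt ℝ (fun y => c * b y) z := hb.const_mul c
  have e : (fun y => (a y + c * b y) / 2) = (fun y => (2:ℂ)⁻¹ * (a y + c * b y)) := by
    funext y; ring
  rw [e, fderiv_const_mul (ha.fun_add h1), fderiv_fun_add ha h1, fderiv_const_mul hb]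
  simp only [ContinuousLinearMap.smul_apply, ContinuousLinearMap.add_apply, smul_eq_mul]
  ring

lemma fderiv_differentiable (f : ℂ → ℂ) (hf : ContDiff ℝ 2 f) :
    Differentiable ℝ (fderiv ℝ f) :=
  (hf.fderiv_right (m := 1) (by norm_num)).differentiable one_ne_zero

lemma dg_diff (f : ℂ → ℂ) (hf : ContDiff ℝ 2 f) (v : ℂ) :
    Differentiable ℝ (fun y => fderiv ℝ f y v) :=
  (fderiv_differentiable f hf).clm_apply (differentiable_const v)

lemma w1_eq (F : ℂ → ℂ) :
    w1 F = fun z => (fderiv ℝ F z 1 + (-I) * fderiv ℝ F z I) / 2 := by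
  funext z; simp only [w1]; ring

lemma w1bar_eq (F : ℂ → ℂ) :
    w1bar F = fun z => (fderiv ℝ F z 1 + I * fderiv ℝ F z I) / 2 := rfl

lemma w1_diff (f : ℂ → ℂ) (hf : ContDiff ℝ 2 f) : Differentiable ℝ (w1 f) := by
  rw [w1_eq, show (fun z => (fderiv ℝ f z 1 + (-I) * fderiv ℝ f z I) / 2)
      = (fun z => (2:ℂ)⁻¹ * (fderiv ℝ f z 1 + (-I) * fderiv ℝ f z I)) from
    funext fun z => div_eq_inv_mul _ _]
  exact ((dg_diff f hf 1).add ((dg_diff f hf I).const_mul _)).const_mul _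

lemma w1bar_diff (f : ℂ → ℂ) (hf : ContDiff ℝ 2 f) : Differentiable ℝ (w1bar f) := by
  rw [w1bar_eq, show (fun z => (fderiv ℝ f z 1 + I * fderiv ℝ f z I) / 2)
      = (fun z => (2:ℂ)⁻¹ * (fderiv ℝ f z 1 + I * fderiv ℝ f z I)) from
    funext fun z => div_eq_inv_mul _ _]
  exact ((dg_diff f hf 1).add ((dg_diff f hf I).const_mul _)).const_mul _

lemma fderiv_fderiv_apply (f : ℂ → ℂ) (hf : ContDiff ℝ 2 f) (z v w : ℂ) :
    fderiv ℝ (fun y => fderiv ℝ f y v) z w = fderiv ℝ (fderiv ℝ f) z w v := by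
  rw [fderiv_clm_apply (fderiv_differentiable f hf z) (differentiableAt_const v)]
  simp

lemma fderiv_w (f : ℂ → ℂ) (hf : ContDiff ℝ 2 f) (c z w : ℂ) :
    fderiv ℝ (fun y => (fderiv ℝ f y 1 + c * fderiv ℝ f y I) / 2) z w
      = (fderiv ℝ (fderiv ℝ f) z w 1 + c * fderiv ℝ (fderiv ℝ f) z w I) / 2 := by
  rw [fderiv_aux _ _ _ _ _ ((dg_diff f hf 1) z) ((dg_diff f hf I) z),
    fderiv_fderiv_apply f hf, fderiv_fderiv_apply f hf]

lemma w_symm (f : ℂ → ℂ) (hf : ContDiff ℝ 2 f) (z : ℂ) :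
    w1bar (w1 f) z = w1 (w1bar f) z := by
  have hsym : ∀ v w, fderiv ℝ (fderiv ℝ f) z v w = fderiv ℝ (fderiv ℝ f) z w v :=
    hf.contDiffAt.isSymmSndFDerivAt (by norm_num)
  have e1 : w1bar (w1 f) z
      = ((fderiv ℝ (fderiv ℝ f) z 1 1 + (-I) * fderiv ℝ (fderiv ℝ f) z 1 I) / 2
        + I * ((fderiv ℝ (fderiv ℝ f) z I 1 + (-I) * fderiv ℝ (fderiv ℝ f) z I I) / 2)) / 2 := by
    simp only [w1bar_eq, w1_eq]
    rw [fderiv_w f hf, fderiv_w f hf]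
  have e2 : w1 (w1bar f) z
      = ((fderiv ℝ (fderiv ℝ f) z 1 1 + I * fderiv ℝ (fderiv ℝ f) z 1 I) / 2
        - I * ((fderiv ℝ (fderiv ℝ f) z I 1 + I * fderiv ℝ (fderiv ℝ f) z I I) / 2)) / 2 := by
    simp only [w1, w1bar_eq]
    rw [fderiv_w f hf, fderiv_w f hf]
  rw [e1, e2]
  linear_combination (hsym 1 I) * (-I) / 2

lemma pd_sub {n : ℕ} (μ : Fin (n+1)) (g h : (Fin (n+1) → ℝ) → ℂ) (x : (Fin (n+1) → ℝ))
    (hg : DifferentiableAt ℝ g x) (hh : DifferentiableAt ℝ h x) :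
    pd μ (fun y => g y - h y) x = pd μ g x - pd μ h x := by
  simp only [pd]
  rw [fderiv_fun_sub hg hh]
  simp

lemma pd_mul {n : ℕ} (μ : Fin (n+1)) (g h : (Fin (n+1) → ℝ) → ℂ) (x : (Fin (n+1) → ℝ))
    (hg : DifferentiableAt ℝ g x) (hh : DifferentiableAt ℝ h x) :
    pd μ (fun y => g y * h y) x = g x * pd μ h x + h x * pd μ g x := by
  simp only [pd]
  rw [fderiv_fun_mul hg hh]
  simp [smul_eq_mul]

end Aux

theorem stmt4 {n : ℕ} (u : (Fin (n+1) → ℝ) → ℂ)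
    (hu : ContDiff ℝ 2 u)
    (hwave : ∀ x, box2 u x = 0)
    (hnull : ∀ x, (pd 0 u x)^2 - ∑ j : Fin n, (pd j.succ u x)^2 = 0)
    (f : ℂ → ℂ) (hf : ContDiff ℝ 2 f)
    (J : Fin (n+1) → (Fin (n+1) → ℝ) → ℂ)
    (hJ : J = fun μ x =>
      w1 f (u x) * pd μ u x - w1bar f (u x) * pd μ (fun y => starRingEnd ℂ (u y)) x) :
    ∀ x, pd 0 (J 0) x - ∑ l : Fin n, pd l.succ (J l.succ) x = 0 := by
  intro x
  subst hJ
  have hud : Differentiable ℝ u := hu.differentiable (by norm_num)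
  have hpd : ∀ μ : Fin (n+1), Differentiable ℝ (pd μ u) := fun μ =>
    ((hu.fderiv_right (m := 1) (by norm_num)).differentiable one_ne_zero).clm_apply
      (differentiable_const _)
  have key : ∀ μ : Fin (n+1),
      pd μ (fun y => w1 f (u y) * pd μ u y
          - w1bar f (u y) * pd μ (fun z => starRingEnd ℂ (u z)) y) x
      = w1 (w1 f) (u x) * (pd μ u x)^2
        - w1bar (w1bar f) (u x) * (starRingEnd ℂ (pd μ u x))^2
        + w1 f (u x) * pd μ (pd μ u) x
        - w1bar f (u x) * starRingEnd ℂ (pd μ (pd μ u) x) := by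
    intro μ
    have hc : (fun y => w1 f (u y) * pd μ u y
          - w1bar f (u y) * pd μ (fun z => starRingEnd ℂ (u z)) y)
        = (fun y => w1 f (u y) * pd μ u y
          - w1bar f (u y) * starRingEnd ℂ (pd μ u y)) := by
      funext y; rw [pd_conj]
    rw [hc]
    have d1 : DifferentiableAt ℝ (fun y => w1 f (u y)) x :=
      ((w1_diff f hf) (u x)).comp x (hud x)
    have d1' : DifferentiableAt ℝ (fun y => w1bar f (u y)) x :=
      ((w1bar_diff f hf) (u x)).comp x (hud x)
    have d2 : DifferentiableAt ℝ (pd μ u) x := hpd μ x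
    have d3 : DifferentiableAt ℝ (fun y => starRingEnd ℂ (pd μ u y)) x := by
      have h : (fun y => starRingEnd ℂ (pd μ u y)) = (Complex.conjCLE : ℂ → ℂ) ∘ pd μ u := by
        funext y; simp [Complex.conjCLE_apply]
      rw [h]
      exact (Complex.conjCLE.differentiable.comp (hpd μ)) x
    have hA : DifferentiableAt ℝ (fun y => w1 f (u y) * pd μ u y) x := d1.mul d2
    have hB : DifferentiableAt ℝ (fun y => w1bar f (u y) * starRingEnd ℂ (pd μ u y)) x :=
      d1'.mul d3
    have hsub := pd_sub μ _ _ x hA hB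
    have hmulA := pd_mul μ (fun y => w1 f (u y)) (pd μ u) x d1 d2
    have hmulB := pd_mul μ (fun y => w1bar f (u y))
      (fun y => starRingEnd ℂ (pd μ u y)) x d1' d3
    have hcomp1 := pd_comp μ u (w1 f) x (hud x) ((w1_diff f hf) (u x))
    have hcomp2 := pd_comp μ u (w1bar f) x (hud x) ((w1bar_diff f hf) (u x))
    have hconj2 := pd_conj μ (pd μ u) x
    rw [hsub, hmulA, hmulB, hcomp1, hcomp2, hconj2]
    linear_combination (pd μ u x * starRingEnd ℂ (pd μ u x)) * (w_symm f hf (u x))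
  simp only [key]
  have hA : (pd 0 u x)^2 - ∑ j : Fin n, (pd j.succ u x)^2 = 0 := hnull x
  have hW : pd 0 (pd 0 u) x - ∑ j : Fin n, pd j.succ (pd j.succ u) x = 0 := hwave x
  have hA' : (starRingEnd ℂ (pd 0 u x))^2
      - ∑ j : Fin n, (starRingEnd ℂ (pd j.succ u x))^2 = 0 := by
    have := congrArg (starRingEnd ℂ) hA
    simpa [map_sub, map_sum, map_pow] using this
  have hW' : starRingEnd ℂ (pd 0 (pd 0 u) x)
      - ∑ j : Fin n, starRingEnd ℂ (pd j.succ (pd j.succ u) x) = 0 := by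
    have := congrArg (starRingEnd ℂ) hW
    simpa [map_sub, map_sum] using this
  simp only [Finset.sum_sub_distrib, Finset.sum_add_distrib, ← Finset.mul_sum]
  linear_combination (w1 (w1 f) (u x)) * hA - (w1bar (w1bar f) (u x)) * hA'
    + (w1 f (u x)) * hW - (w1bar f (u x)) * hW'
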